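/- For N ≥ 2 and s ∈ [0,1], the definite integral ∫₀^s (1 - 4((N-1)/N) x(1-x))^(-3/2) dx equals (N/2) * [1 + (2s-1)/sqrt(1 - 4((N-1)/N)s(1-s))]. -/

import Mathlib

theorem stmt_5 (N : ℝ) (hN : N ≥ 2) (s : ℝ) (hs : s ∈ Set.Icc (0:ℝ) 1) :
    ∫ x in (0:ℝ)..s, (1 - 4*((N-1)/N)*x*(1-x)) ^ (-(3:ℝ)/2)
      = (N/2) * (1 + (2*s-1) / Real.sqrt (1 - 4*((N-1)/N)*s*(1-s))) := by
  obtain ⟨hs0, hs1⟩ := hs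
  have hN0 : (0:ℝ) < N := by linarith
  set c : ℝ := (N-1)/N with hc
  clear_value c
  have hcN : c * N = N - 1 := by rw [hc, div_mul_cancel₀ _ hN0.ne']
  have hc0 : 0 ≤ c := by rw [hc]; exact div_nonneg (by linarith) hN0.le
  have hc1 : c < 1 := by rw [hc, div_lt_one hN0]; linarith
  have hg : ∀ x ∈ Set.Icc (0:ℝ) 1, 0 < 1 - 4*c*x*(1-x) := by
    intro x hx
    nlinarith [mul_nonneg hc0 (sq_nonneg (2*x-1))]
  have key : ∀ x ∈ Set.uIcc (0:ℝ) s,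
      HasDerivAt (fun a => (N/2) * (1 + (2*a-1) / Real.sqrt (1 - 4*c*a*(1-a))))
        ((1 - 4*c*x*(1-x)) ^ (-(3:ℝ)/2)) x := by
    intro x hx
    rw [Set.uIcc_of_le hs0] at hx
    have hx01 : x ∈ Set.Icc (0:ℝ) 1 := ⟨hx.1, hx.2.trans hs1⟩
    have hgx := hg x hx01
    have hsx : 0 < Real.sqrt (1 - 4*c*x*(1-x)) := Real.sqrt_pos.2 hgx
    have h1 : HasDerivAt (fun a : ℝ => 1 - 4*c*a*(1-a)) (4*c*(2*x-1)) x := by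
      have hA : HasDerivAt (fun a : ℝ => a*(1-a)) (1*(1-x) + x*(0-1)) x :=
        (hasDerivAt_id x).mul ((hasDerivAt_const x 1).sub (hasDerivAt_id x))
      have hB := (hA.const_mul (4*c)).const_sub 1
      have hfun : (fun a : ℝ => 1 - 4*c*(a*(1-a))) = fun a : ℝ => 1 - 4*c*a*(1-a) := by
        funext a; ring
      rw [hfun] at hB
      exact hB.congr_deriv (by ring)
    have h2 := h1.sqrt (ne_of_gt hgx)
    have h3 : HasDerivAt (fun a : ℝ => 2*a - 1) 2 x := by
      have := ((hasDerivAt_id x).const_mul 2).sub_const 1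
      exact this.congr_deriv (by ring)
    have h4 := h3.div h2 (ne_of_gt hsx)
    have h5 := (h4.const_add 1).const_mul (N/2)
    refine HasDerivAt.congr_deriv h5 (Eq.symm ?_)
    set t := Real.sqrt (1 - 4*c*x*(1-x)) with ht
    have ht2 : t^2 = 1 - 4*c*x*(1-x) := Real.sq_sqrt hgx.le
    have hrw : (1 - 4*c*x*(1-x)) ^ (-(3:ℝ)/2) = (t^2 * t)⁻¹ := by
      rw [show (-(3:ℝ)/2) = -(3/2) by norm_num, Real.rpow_neg hgx.le]
      congr 1
      rw [show ((3:ℝ)/2) = 1 + 1/2 by norm_num, Real.rpow_add hgx, Real.rpow_one,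
        ← Real.sqrt_eq_rpow, ← ht, ht2]
    rw [hrw]
    have htne : t ≠ 0 := ne_of_gt hsx
    have h6 : N*t^2 - N*c*(2*x-1)^2 = 1 := by linear_combination N*ht2 - hcN
    field_simp
    linear_combination (-4) * h6
  have hcont : IntervalIntegrable (fun x => (1 - 4*c*x*(1-x)) ^ (-(3:ℝ)/2))
      MeasureTheory.volume 0 s := by
    apply ContinuousOn.intervalIntegrable
    apply ContinuousOn.rpow_const
    · fun_prop
    · intro x hx
      rw [Set.uIcc_of_le hs0] at hx
      exact Or.inl (ne_of_gt (hg x ⟨hx.1, hx.2.trans hs1⟩))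
  rw [intervalIntegral.integral_eq_sub_of_hasDerivAt key hcont]
  simp [Real.sqrt_one]
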